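/- Let V be a finite-dimensional real inner product space and let α₁, …, α_n be a basis of V such that ⟨α_i, α_j⟩ ≤ 0 for all i ≠ j. Let I ⊆ {1, …, n}, let V_I = span{α_i : i ∈ I}, let (ϖ_i)_{i ∈ I} be the basis of V_I dual to (α_i)_{i ∈ I} within V_I (i.e. ⟨ϖ_i, α_j⟩ = δ_{ij} for i, j ∈ I), and let p : V → V_I^⊥ be the orthogonal projection. Suppose Y ∈ V satisfies: (1) ⟨ϖ_i, Y⟩ ≤ 0 for all i ∈ I, and (2) ⟨α_j, p(Y)⟩ > 0 for all j ∉ I. Then ⟨α_j, Y⟩ > 0 for all j ∉ I. -/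

import Mathlib

open RealInnerProductSpace

theorem regular_outside_of_obtuse_basis {V : Type*} [NormedAddCommGroup V]
    [InnerProductSpace ℝ V] [FiniteDimensional ℝ V] {n : ℕ}
    (b : Module.Basis (Fin n) ℝ V)
    (hobtuse : ∀ i j, i ≠ j → ⟪b i, b j⟫ ≤ 0)
    (I : Set (Fin n)) (ϖ : Fin n → V)
    (hϖmem : ∀ i ∈ I, ϖ i ∈ Submodule.span ℝ (⇑b '' I))
    (hdual : ∀ i ∈ I, ∀ j ∈ I, ⟪ϖ i, b j⟫ = if i = j then 1 else 0)
    (Y : V)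
    (h1 : ∀ i ∈ I, ⟪ϖ i, Y⟫ ≤ 0)
    (h2 : ∀ j ∉ I,
      0 < ⟪b j, ((Submodule.orthogonalProjectionOnto (Submodule.span ℝ (⇑b '' I))ᗮ Y : V))⟫) :
    ∀ j ∉ I, 0 < ⟪b j, Y⟫ := by
  intro j hj
  set W := Submodule.span ℝ (⇑b '' I) with hWdef
  set Z : V := (Submodule.orthogonalProjectionOnto Wᗮ Y : V) with hZdef
  set X : V := Y - Z with hXdef
  have hXW : X ∈ W := by
    have h := W.starProjection_add_starProjection_orthogonal Y
    have : X = (Submodule.orthogonalProjectionOnto W Y : V) := by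
      exact sub_eq_of_eq_add h.symm
    rw [this]; exact (Submodule.orthogonalProjectionOnto W Y).2
  set c : Fin n → ℝ := fun i => b.repr X i with hcdef
  have hc0 : ∀ k, k ∉ I → c k = 0 := by
    intro k hk
    have := (b.mem_span_image).mp hXW
    by_contra h
    exact hk (this (Finsupp.mem_support_iff.mpr h))
  -- X as a sum
  have hXsum : X = ∑ k, c k • b k := (b.sum_repr X).symm
  -- c i = ⟪ϖ i, Y⟫ for i ∈ I
  have hcY : ∀ i ∈ I, c i = ⟪ϖ i, Y⟫ := by
    intro i hi
    have hZperp : ⟪ϖ i, Z⟫ = 0 :=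
      Submodule.inner_right_of_mem_orthogonal (hϖmem i hi)
        (Submodule.orthogonalProjectionOnto Wᗮ Y).2
    have hinnerX : ⟪ϖ i, X⟫ = c i := by
      rw [hXsum, inner_sum]
      rw [Finset.sum_eq_single i]
      · rw [real_inner_smul_right, hdual i hi i hi]; simp
      · intro k _ hk
        rw [real_inner_smul_right]
        by_cases hkI : k ∈ I
        · rw [hdual i hi k hkI, if_neg (fun h => hk h.symm)]; ring
        · rw [hc0 k hkI]; ring
      · intro h; exact absurd (Finset.mem_univ i) h
    have : ⟪ϖ i, Y⟫ = ⟪ϖ i, X⟫ + ⟪ϖ i, Z⟫ := by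
      rw [← inner_add_right, hXdef]; congr 1; abel
    rw [this, hZperp, hinnerX]; ring
  -- main computation
  have hYsplit : ⟪b j, Y⟫ = ⟪b j, X⟫ + ⟪b j, Z⟫ := by
    rw [← inner_add_right, hXdef]; congr 1; abel
  have hXnonneg : 0 ≤ ⟪b j, X⟫ := by
    rw [hXsum, inner_sum]
    apply Finset.sum_nonneg
    intro k _
    rw [real_inner_smul_right]
    by_cases hkI : k ∈ I
    · have hck : c k ≤ 0 := (hcY k hkI) ▸ h1 k hkI
      have hkj : j ≠ k := fun h => hj (h ▸ hkI)
      nlinarith [mul_nonneg (neg_nonneg.mpr hck) (neg_nonneg.mpr (hobtuse j k hkj))]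
    · rw [hc0 k hkI]; ring_nf; exact le_refl 0
  have := h2 j hj
  rw [hYsplit]
  linarith
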